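/- Let $p = (p_1,\ldots,p_N)$ be a probability distribution on $H = \{1,\ldots,N\}$ and $Y_n$ the number of distinct values in $n$ i.i.d. draws from $p$. Then for $1 \le k \le N$, $P(Y_n \le k) = \sum_{A \subseteq H, |A| \le k} (-1)^{k-|A|} \binom{N-|A|-1}{k-|A|} p_A^n$, where $p_A = \sum_{i\in A} p_i$. -/

import Mathlib

open Finset

private lemma alt_sum_choose_real (m : ℕ) (hm : m ≠ 0) :
    ∑ t ∈ range (m + 1), (-1 : ℝ) ^ t * (m.choose t) = 0 := by
  have h := add_pow (-1 : ℝ) 1 m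
  simp only [one_pow, mul_one, neg_add_cancel] at h
  rw [← h, zero_pow hm]

private lemma key_identity (M : ℕ) : ∀ r, r ≤ M →
    ∑ t ∈ range (r + 1),
      (-1 : ℝ) ^ (r - t) * (M.choose t) * ((M - 1 - t).choose (r - t)) = 1 := by
  intro r
  induction r with
  | zero => intro _; simp
  | succ r ih =>
    intro hr
    have hrM : r ≤ M := by omega
    have hg : ∑ t ∈ range (r + 2),
        (-1 : ℝ) ^ (r + 1 - t) * (M.choose t) * ((M - t).choose (r + 1 - t)) = 0 := by
      have h1 : ∀ t ∈ range (r + 2),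
          (-1 : ℝ) ^ (r + 1 - t) * (M.choose t) * ((M - t).choose (r + 1 - t))
          = (M.choose (r + 1)) * ((-1 : ℝ) ^ (r + 1 - t) * ((r + 1).choose t)) := by
        intro t ht
        rw [mem_range] at ht
        have htr : t ≤ r + 1 := by omega
        have := Nat.choose_mul (n := M) htr
        have hcast : (M.choose t : ℝ) * ((M - t).choose (r + 1 - t))
            = (M.choose (r + 1)) * ((r + 1).choose t) := by
          exact_mod_cast congrArg (Nat.cast (R := ℝ)) this.symm
        rw [mul_assoc, hcast]; ring
      rw [Finset.sum_congr rfl h1, ← Finset.mul_sum]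
      have h2 : ∑ t ∈ range (r + 2), (-1 : ℝ) ^ (r + 1 - t) * ((r + 1).choose t) = 0 := by
        rw [← Finset.sum_range_reflect]
        have hre : r + 2 - 1 = r + 1 := rfl
        simp only [hre]
        have h3 : ∀ t ∈ range (r + 2),
            (-1 : ℝ) ^ (r + 1 - (r + 1 - t)) * ((r + 1).choose (r + 1 - t))
            = (-1 : ℝ) ^ t * ((r + 1).choose t) := by
          intro t ht
          rw [mem_range] at ht
          have h4 : r + 1 - (r + 1 - t) = t := by omega
          rw [h4, Nat.choose_symm (by omega)]
        rw [Finset.sum_congr rfl h3]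
        exact alt_sum_choose_real (r + 1) (by omega)
      rw [h2, mul_zero]
    -- main computation
    have split : ∀ t ∈ range (r + 1),
        (-1 : ℝ) ^ (r + 1 - t) * (M.choose t) * ((M - 1 - t).choose (r + 1 - t))
        = (-1 : ℝ) ^ (r + 1 - t) * (M.choose t) * ((M - t).choose (r + 1 - t))
          + (-1 : ℝ) ^ (r - t) * (M.choose t) * ((M - 1 - t).choose (r - t)) := by
      intro t ht
      rw [mem_range] at ht
      have htr : t ≤ r := by omega
      have e1 : M - t = (M - 1 - t) + 1 := by omega
      have e2 : r + 1 - t = (r - t) + 1 := by omega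
      have e3 : ((M - t).choose (r + 1 - t) : ℝ)
          = ((M - 1 - t).choose ((r - t) + 1)) + ((M - 1 - t).choose (r - t)) := by
        rw [e1, e2, Nat.choose_succ_succ]
        push_cast; ring
      have e4 : (-1 : ℝ) ^ (r + 1 - t) = -(-1 : ℝ) ^ (r - t) := by
        rw [e2, pow_succ]; ring
      rw [e4, e2] at *
      rw [e3]
      ring
    rw [Finset.sum_range_succ, Finset.sum_congr rfl split, Finset.sum_add_distrib]
    rw [Finset.sum_range_succ] at hg
    have hlast : (-1 : ℝ) ^ (r + 1 - (r + 1)) * (M.choose (r + 1))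
        * ((M - 1 - (r + 1)).choose (r + 1 - (r + 1)))
        = (-1 : ℝ) ^ (r + 1 - (r + 1)) * (M.choose (r + 1))
          * ((M - (r + 1)).choose (r + 1 - (r + 1))) := by
      simp
    rw [hlast]
    have := ih hrM
    linarith [hg, this]

private lemma superset_sum (N k : ℕ) (hkN : k ≤ N) (S : Finset (Fin N)) (hS : S.card ≤ k) :
    ∑ A ∈ Finset.univ.powerset.filter (fun A : Finset (Fin N) => A.card ≤ k),
      (if S ⊆ A then
        (-1 : ℝ) ^ (k - A.card) * ((N - A.card - 1).choose (k - A.card)) else 0) = 1 := by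
  classical
  set m := S.card with hm
  have hmN : m ≤ N := hS.trans hkN
  set c : ℕ → ℝ := fun j => (-1 : ℝ) ^ (k - j) * ((N - j - 1).choose (k - j)) with hc
  set h : Finset (Fin N) → ℝ := fun A => if A.card ≤ k then c A.card else 0 with hh
  have step1 : ∑ A ∈ Finset.univ.powerset.filter (fun A : Finset (Fin N) => A.card ≤ k),
      (if S ⊆ A then c A.card else 0)
      = ∑ A ∈ (Finset.univ.powerset (α := Fin N)).filter (fun A => S ⊆ A), h A := by
    rw [Finset.sum_filter, Finset.sum_filter]
    apply Finset.sum_congr rfl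
    intro A _
    by_cases h1 : A.card ≤ k <;> by_cases h2 : S ⊆ A <;> simp [h, h1, h2]
  rw [step1]
  have step2 : ∑ A ∈ (Finset.univ.powerset (α := Fin N)).filter (fun A => S ⊆ A), h A
      = ∑ B ∈ Sᶜ.powerset, h (B ∪ S) := by
    apply Finset.sum_nbij' (i := fun A => A \ S) (j := fun B => B ∪ S)
    · intro A hA
      simp only [mem_filter, mem_powerset] at hA
      simp only [mem_powerset]
      intro x hx
      simp only [mem_sdiff] at hx
      simp [hx.2]
    · intro B hB
      simp only [mem_powerset] at hB
      simp only [mem_filter, mem_powerset]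
      exact ⟨subset_univ _, subset_union_right⟩
    · intro A hA
      simp only [mem_filter, mem_powerset] at hA
      exact sdiff_union_of_subset hA.2
    · intro B hB
      simp only [mem_powerset] at hB
      rw [union_sdiff_right]
      exact sdiff_eq_self_of_disjoint (disjoint_left.mpr fun x hx => by
        have := hB hx; simp only [mem_compl] at this; exact this)
    · intro A hA
      simp only [mem_filter, mem_powerset] at hA
      rw [sdiff_union_of_subset hA.2]
  rw [step2]
  have hcard : ∀ B ∈ Sᶜ.powerset, h (B ∪ S) = (fun t => if t + m ≤ k then c (t + m) else 0) B.card := by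
    intro B hB
    simp only [mem_powerset] at hB
    have hdisj : Disjoint B S := disjoint_left.mpr fun x hx => by
      have := hB hx; simp only [mem_compl] at this; exact this
    rw [hh]
    simp only [card_union_of_disjoint hdisj, hm]
  rw [Finset.sum_congr rfl hcard]
  beta_reduce
  rw [Finset.sum_powerset_apply_card (f := fun t => if t + m ≤ k then c (t + m) else 0)]
  have hScompl : Sᶜ.card = N - m := by
    rw [card_compl, Fintype.card_fin]
  rw [hScompl]
  set M := N - m with hM
  set r := k - m with hr
  have hrM : r ≤ M := by omega
  have step3 : ∑ t ∈ range (M + 1), (M.choose t) • (if t + m ≤ k then c (t + m) else 0)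
      = ∑ t ∈ range (r + 1), (M.choose t) • (if t + m ≤ k then c (t + m) else 0) := by
    apply (Finset.sum_subset (by intro x; simp only [mem_range]; omega) ?_).symm
    intro t ht htr
    simp only [mem_range] at ht htr
    have : ¬ (t + m ≤ k) := by omega
    simp [this]
  rw [step3]
  have step4 : ∀ t ∈ range (r + 1), (M.choose t) • (if t + m ≤ k then c (t + m) else 0)
      = (-1 : ℝ) ^ (r - t) * (M.choose t) * ((M - 1 - t).choose (r - t)) := by
    intro t ht
    simp only [mem_range] at ht
    have h1 : t + m ≤ k := by omega
    have h2 : k - (t + m) = r - t := by omega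
    have h3 : N - (t + m) - 1 = M - 1 - t := by omega
    rw [if_pos h1, hc]
    simp only [h2, h3, nsmul_eq_mul]
    ring
  rw [Finset.sum_congr rfl step4]
  exact key_identity M r hrM
/-- The probability of an event `E` for `n` i.i.d. draws from the distribution `p`
on `{1, …, N}`: the sum of the product weights of the outcome sequences in `E`. -/
noncomputable def prob {N : ℕ} (p : Fin N → ℝ) {n : ℕ} (E : Set (Fin n → Fin N)) : ℝ :=
  ∑ ω : Fin n → Fin N, Set.indicator E (fun ω => ∏ i, p (ω i)) ω

/-- The number of distinct values drawn, `Y_n`. -/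
noncomputable def distinctCount {N n : ℕ} (ω : Fin n → Fin N) : ℕ :=
  (Finset.univ.image ω).card

/-- `P(Y_n ≤ k) = ∑_{A ⊆ H, |A| ≤ k} (-1)^{k-|A|} C(N-|A|-1, k-|A|) p_A^n`. -/
theorem stmt_3 (N n k : ℕ) (p : Fin N → ℝ) (hp : ∀ i, 0 ≤ p i) (hsum : ∑ i, p i = 1)
    (hk1 : 1 ≤ k) (hkN : k ≤ N) :
    prob p {ω : Fin n → Fin N | distinctCount ω ≤ k}
      = ∑ A ∈ Finset.univ.powerset.filter (fun A : Finset (Fin N) => A.card ≤ k),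
          (-1 : ℝ) ^ (k - A.card) * (Nat.choose (N - A.card - 1) (k - A.card)) *
            (∑ i ∈ A, p i) ^ n := by
  classical
  set F := Finset.univ.powerset.filter (fun A : Finset (Fin N) => A.card ≤ k) with hF
  have expand : ∀ A : Finset (Fin N), (∑ i ∈ A, p i) ^ n
      = ∑ ω : Fin n → Fin N, if (∀ j, ω j ∈ A) then ∏ j, p (ω j) else 0 := by
    intro A
    have h1 : (∑ i ∈ A, p i) ^ n = ∏ _j : Fin n, ∑ i ∈ A, p i := by
      rw [Finset.prod_const, Finset.card_univ, Fintype.card_fin]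
    rw [h1, Finset.prod_univ_sum]
    rw [← Finset.sum_filter]
    apply Finset.sum_congr _ (fun _ _ => rfl)
    ext g
    simp [Fintype.mem_piFinset]
  calc prob p {ω : Fin n → Fin N | distinctCount ω ≤ k}
      = ∑ ω : Fin n → Fin N, (if distinctCount ω ≤ k then ∏ j, p (ω j) else 0) := by
        simp [prob, Set.indicator_apply, Set.mem_setOf_eq]
    _ = ∑ ω : Fin n → Fin N, (∏ j, p (ω j)) *
          ∑ A ∈ F, (if Finset.univ.image ω ⊆ A then
            (-1 : ℝ) ^ (k - A.card) * ((N - A.card - 1).choose (k - A.card)) else 0) := by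
        apply Finset.sum_congr rfl
        intro ω _
        by_cases hω : distinctCount ω ≤ k
        · rw [if_pos hω, superset_sum N k hkN _ hω, mul_one]
        · rw [if_neg hω]
          have hz : ∀ A ∈ F, (if Finset.univ.image ω ⊆ A then
              (-1 : ℝ) ^ (k - A.card) * ((N - A.card - 1).choose (k - A.card)) else 0) = 0 := by
            intro A hA
            rw [hF, Finset.mem_filter] at hA
            rw [if_neg]
            intro hsub
            exact hω (le_trans (Finset.card_le_card hsub) hA.2)
          rw [Finset.sum_congr rfl hz, Finset.sum_const_zero, mul_zero]
    _ = ∑ ω : Fin n → Fin N, ∑ A ∈ F, (if Finset.univ.image ω ⊆ A then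
          (-1 : ℝ) ^ (k - A.card) * ((N - A.card - 1).choose (k - A.card)) * ∏ j, p (ω j)
          else 0) := by
        apply Finset.sum_congr rfl
        intro ω _
        rw [Finset.mul_sum]
        apply Finset.sum_congr rfl
        intro A _
        by_cases hsub : Finset.univ.image ω ⊆ A <;> simp [hsub] <;> ring
    _ = ∑ A ∈ F, ∑ ω : Fin n → Fin N, (if Finset.univ.image ω ⊆ A then
          (-1 : ℝ) ^ (k - A.card) * ((N - A.card - 1).choose (k - A.card)) * ∏ j, p (ω j)
          else 0) := Finset.sum_comm
    _ = ∑ A ∈ F, (-1 : ℝ) ^ (k - A.card) * ((N - A.card - 1).choose (k - A.card))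
          * (∑ i ∈ A, p i) ^ n := by
        apply Finset.sum_congr rfl
        intro A _
        rw [expand A, Finset.mul_sum]
        apply Finset.sum_congr rfl
        intro ω _
        have hiff : (Finset.univ.image ω ⊆ A) ↔ (∀ j, ω j ∈ A) := by
          simp [Finset.image_subset_iff]
        by_cases hsub : ∀ j, ω j ∈ A
        · rw [if_pos (hiff.mpr hsub), if_pos hsub]
        · rw [if_neg (fun h => hsub (hiff.mp h)), if_neg hsub, mul_zero]
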